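/- Suppose for every index i from 1 to m the formula (⋆) holds: for all tuple sequences t = ⟨t₁,…,t_m⟩ with θ(t), there exists j ≤ n_i such that θ_{i,j}(t_i) holds and for all tuples t_i' with θ_{i,j}(t_i') and t_i'[U_{i,j}] = t_i[U_{i,j}], the sequence s = t with its i-th component replaced by t_i' satisfies θ(s) and s[U] = t[U]. Then the set of views V determines Q: for all database instances I, I', if V_{i,j}(I) = V_{i,j}(I') for all i,j, then Q(I) = Q(I'). -/

import Mathlib

open scoped Classical

/-- Restriction `t[U]` of a tuple to an attribute set `U`. -/
noncomputable def restrict {A B : Type*} (U : Set A) (t : A → B) : A → Option B :=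
  fun a => if a ∈ U then some (t a) else none

/-- Project-select query `π_U σ_θ S` under set semantics. -/
noncomputable def psView {A B : Type*} (U : Set A) (θ : (A → B) → Prop)
    (S : Set (A → B)) : Set (A → Option B) :=
  {r | ∃ t ∈ S, θ t ∧ r = restrict U t}

/-- The product tuple of a sequence of tuples `⟨t₁,…,t_m⟩`. -/
def prodTup {m : ℕ} {A B : Type*} (ts : Fin m → A → B) : Fin m × A → B :=
  fun p => ts p.1 p.2

/-- The project-select-join query `Q = π_U σ_θ (R₁ × ⋯ × R_m)` with no self joins. -/
noncomputable def joinQuery {m : ℕ} {A B : Type*} (U : Set (Fin m × A))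
    (θ : (Fin m → A → B) → Prop) (I : Fin m → Set (A → B)) :
    Set (Fin m × A → Option B) :=
  {r | ∃ ts : Fin m → A → B, (∀ i, ts i ∈ I i) ∧ θ ts ∧ r = restrict U (prodTup ts)}

/-- Condition (⋆) for index `i`. -/
def StarCond {m : ℕ} {A B : Type*} (U : Set (Fin m × A)) (θ : (Fin m → A → B) → Prop)
    (n : Fin m → ℕ) (Uv : ∀ i, Fin (n i) → Set A)
    (θv : ∀ i, Fin (n i) → (A → B) → Prop) (i : Fin m) : Prop :=
  ∀ ts : Fin m → A → B, θ ts →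
    ∃ j : Fin (n i), θv i j (ts i) ∧
      ∀ t' : A → B, θv i j t' → restrict (Uv i j) t' = restrict (Uv i j) (ts i) →
        θ (Function.update ts i t') ∧
          restrict U (prodTup (Function.update ts i t')) = restrict U (prodTup ts)

/-- `V` determines `Q`. -/
def Determines {m : ℕ} {A B : Type*} (U : Set (Fin m × A)) (θ : (Fin m → A → B) → Prop)
    (n : Fin m → ℕ) (Uv : ∀ i, Fin (n i) → Set A)
    (θv : ∀ i, Fin (n i) → (A → B) → Prop) : Prop :=
  ∀ I I' : Fin m → Set (A → B),
    (∀ i, ∀ j : Fin (n i), psView (Uv i j) (θv i j) (I i) = psView (Uv i j) (θv i j) (I' i)) →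
    joinQuery U θ I = joinQuery U θ I'

lemma aux_subset {m : ℕ} {A B : Type*} (U : Set (Fin m × A))
    (θ : (Fin m → A → B) → Prop) (n : Fin m → ℕ) (Uv : ∀ i, Fin (n i) → Set A)
    (θv : ∀ i, Fin (n i) → (A → B) → Prop)
    (hstar : ∀ i : Fin m, StarCond U θ n Uv θv i)
    (I I' : Fin m → Set (A → B))
    (hV : ∀ i, ∀ j : Fin (n i),
      psView (Uv i j) (θv i j) (I i) = psView (Uv i j) (θv i j) (I' i)) :
    joinQuery U θ I ⊆ joinQuery U θ I' := by
  intro r hr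
  obtain ⟨ts, hmem, hθ, hrst⟩ := hr
  -- induction: swap components one by one
  have key : ∀ k : ℕ, k ≤ m → ∃ ts' : Fin m → A → B, θ ts' ∧
      restrict U (prodTup ts') = restrict U (prodTup ts) ∧
      ∀ i : Fin m, (i.val < k → ts' i ∈ I' i) ∧ (k ≤ i.val → ts' i ∈ I i) := by
    intro k
    induction k with
    | zero =>
      intro _
      exact ⟨ts, hθ, rfl, fun i => ⟨fun h => absurd h (Nat.not_lt_zero _),
        fun _ => hmem i⟩⟩
    | succ k ih =>
      intro hk
      obtain ⟨ts', hθ', hrst', hprop⟩ := ih (Nat.le_of_succ_le hk)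
      set i : Fin m := ⟨k, hk⟩ with hi
      have hIi : ts' i ∈ I i := (hprop i).2 (le_refl k)
      obtain ⟨j, hθvj, hrepl⟩ := hstar i ts' hθ'
      have hview : restrict (Uv i j) (ts' i) ∈ psView (Uv i j) (θv i j) (I i) :=
        ⟨ts' i, hIi, hθvj, rfl⟩
      rw [hV i j] at hview
      obtain ⟨t', ht'I', hθt', hrt'⟩ := hview
      obtain ⟨hθnew, hrnew⟩ := hrepl t' hθt' hrt'.symm
      refine ⟨Function.update ts' i t', hθnew, hrnew.trans hrst', fun i' => ?_⟩
      constructor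
      · intro hlt
        by_cases h : i' = i
        · subst h; simpa using ht'I'
        · rw [Function.update_of_ne h]
          exact (hprop i').1 (by
            rcases Nat.lt_succ_iff_lt_or_eq.mp hlt with h' | h'
            · exact h'
            · exact absurd (Fin.ext h' : i' = i) h)
      · intro hge
        have h : i' ≠ i := by
          intro h; subst h; simp [hi] at hge
        rw [Function.update_of_ne h]
        exact (hprop i').2 (by omega)
  obtain ⟨ts', hθ', hrst', hprop⟩ := key m (le_refl m)
  exact ⟨ts', fun i => (hprop i).1 i.isLt, hθ', by rw [hrst, ← hrst']⟩

theorem star_implies_determinacy {m : ℕ} {A B : Type*} (U : Set (Fin m × A))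
    (θ : (Fin m → A → B) → Prop) (n : Fin m → ℕ) (Uv : ∀ i, Fin (n i) → Set A)
    (θv : ∀ i, Fin (n i) → (A → B) → Prop)
    (hstar : ∀ i : Fin m, StarCond U θ n Uv θv i) :
    Determines U θ n Uv θv := by
  intro I I' hV
  exact Set.Subset.antisymm
    (aux_subset U θ n Uv θv hstar I I' hV)
    (aux_subset U θ n Uv θv hstar I' I (fun i j => (hV i j).symm))
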